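/- For every p ∈ (0,1], the supremum over κ ∈ (0,1] of κ p^{κ−1} equals −exp(−1)/(p ln p) if p ≤ exp(−1), and equals 1 if p > exp(−1). (This supremum is the Vovk–Sellke bound VS(p).) -/

import Mathlib

/-- The Vovk–Sellke bound: for `p ∈ (0,1]`,
`sup_{κ ∈ (0,1]} κ p^{κ-1} = -exp(-1)/(p ln p)` if `p ≤ exp(-1)`, and `= 1`
otherwise. -/
theorem vovk_sellke_bound (p : ℝ) (hp : p ∈ Set.Ioc (0 : ℝ) 1) :
    (⨆ κ ∈ Set.Ioc (0 : ℝ) 1, κ * p ^ (κ - 1)) =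
      if p ≤ Real.exp (-1) then -Real.exp (-1) / (p * Real.log p) else 1 := by
  obtain ⟨hp0, hp1⟩ := hp
  set L := Real.log p with hLdef
  set M : ℝ := if p ≤ Real.exp (-1) then -Real.exp (-1) / (p * L) else 1 with hMdef
  have hexp : ∀ κ : ℝ, 0 < κ → κ * p ^ (κ - 1) = Real.exp (Real.log κ + L * (κ - 1)) := by
    intro κ hκ
    rw [Real.rpow_def_of_pos hp0, Real.exp_add, Real.exp_log hκ]
  obtain ⟨κ₀, hκ₀, hval, hub⟩ :
      ∃ κ₀ ∈ Set.Ioc (0:ℝ) 1, κ₀ * p ^ (κ₀ - 1) = M ∧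
        ∀ κ ∈ Set.Ioc (0:ℝ) 1, κ * p ^ (κ - 1) ≤ M := by
    by_cases hcase : p ≤ Real.exp (-1)
    · have hL1 : L ≤ -1 := by
        have := Real.log_le_log hp0 hcase
        rwa [Real.log_exp] at this
      have hLneg : L < 0 := lt_of_le_of_lt hL1 (by norm_num)
      have hLne : L ≠ 0 := ne_of_lt hLneg
      set κ₀ : ℝ := -L⁻¹ with hκ₀def
      have hκ₀pos : 0 < κ₀ := by
        rw [hκ₀def]
        have : L⁻¹ < 0 := inv_lt_zero.mpr hLneg
        linarith
      have hκ₀le : κ₀ ≤ 1 := by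
        rw [hκ₀def, neg_inv]
        have h1 : (1:ℝ) ≤ -L := by linarith
        exact inv_le_one_of_one_le₀ h1
      have hLκ₀ : L * κ₀ = -1 := by rw [hκ₀def, mul_neg, mul_inv_cancel₀ hLne]
      have hvalue : κ₀ * p ^ (κ₀ - 1) = M := by
        rw [hexp κ₀ hκ₀pos, hMdef, if_pos hcase]
        have hexpo : Real.log κ₀ + L * (κ₀ - 1) = Real.log κ₀ + (-1 - L) := by
          rw [mul_sub, hLκ₀]; ring
        rw [hexpo, Real.exp_add, Real.exp_log hκ₀pos]
        have hpinv : Real.exp (-L) = p⁻¹ := by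
          rw [Real.exp_neg, hLdef, Real.exp_log hp0]
        have hpe : Real.exp (-1 - L) = Real.exp (-1) / p := by
          rw [sub_eq_add_neg, Real.exp_add, hpinv, div_eq_mul_inv]
        rw [hpe, hκ₀def]
        field_simp
      refine ⟨κ₀, ⟨hκ₀pos, hκ₀le⟩, hvalue, ?_⟩
      intro κ ⟨hκpos, hκle⟩
      rw [← hvalue, hexp κ hκpos, hexp κ₀ hκ₀pos, Real.exp_le_exp]
      have hdivpos : 0 < κ / κ₀ := div_pos hκpos hκ₀pos
      have hlog : Real.log (κ / κ₀) ≤ κ / κ₀ - 1 := Real.log_le_sub_one_of_pos hdivpos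
      have hdiv : κ / κ₀ = -(κ * L) := by
        rw [hκ₀def]; field_simp
      rw [Real.log_div (ne_of_gt hκpos) (ne_of_gt hκ₀pos), hdiv] at hlog
      have : L * κ₀ = -1 := hLκ₀
      nlinarith [hlog]
    · have hL1 : -1 < L := by
        push_neg at hcase
        rw [hLdef, ← Real.exp_lt_exp, Real.exp_log hp0]
        exact hcase
      have hone : (1:ℝ) * p ^ ((1:ℝ) - 1) = M := by
        rw [hMdef, if_neg hcase]
        norm_num
      refine ⟨1, ⟨one_pos, le_refl 1⟩, hone, ?_⟩
      intro κ ⟨hκpos, hκle⟩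
      rw [hMdef, if_neg hcase, hexp κ hκpos]
      have h1 : Real.log κ ≤ κ - 1 := Real.log_le_sub_one_of_pos hκpos
      have h2 : L * (κ - 1) ≤ 1 - κ := by nlinarith
      calc Real.exp (Real.log κ + L * (κ - 1)) ≤ Real.exp 0 := by
            rw [Real.exp_le_exp]; linarith
        _ = 1 := Real.exp_zero
  have hMpos : 0 < M := by
    rw [← hval]
    exact mul_pos hκ₀.1 (Real.rpow_pos_of_pos hp0 _)
  show (⨆ κ ∈ Set.Ioc (0 : ℝ) 1, κ * p ^ (κ - 1)) = M
  apply le_antisymm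
  · exact Real.iSup_le (fun κ => Real.iSup_le (fun hκ => hub κ hκ) hMpos.le) hMpos.le
  · have hb : BddAbove (Set.range fun κ : ℝ => ⨆ _ : κ ∈ Set.Ioc (0:ℝ) 1, κ * p ^ (κ - 1)) := by
      refine ⟨M, ?_⟩
      rintro _ ⟨κ, rfl⟩
      exact Real.iSup_le (fun hκ => hub κ hκ) hMpos.le
    have h1 : (⨆ _ : κ₀ ∈ Set.Ioc (0:ℝ) 1, κ₀ * p ^ (κ₀ - 1)) = κ₀ * p ^ (κ₀ - 1) :=
      ciSup_pos (f := fun _ => κ₀ * p ^ (κ₀ - 1)) hκ₀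
    have h2 := le_ciSup hb κ₀
    rw [h1] at h2
    exact hval ▸ h2
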